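/- Let f ∈ L¹(ℝⁿ) vanish a.e. outside ℝ₊ⁿ := [0,∞)ⁿ, let μ be a positive measure on ℝ₊ⁿ∖{0}, and suppose k(f,μ) := ∫_{ℝ₊ⁿ∖{0}} ∫_{ℝⁿ} |f(r−u) − f(r)| dr dμ(u) < ∞ and ∫ min(1, Σ_j u_j) dμ(u) < ∞. Define ψ(s) := ∫_{ℝ₊ⁿ∖{0}} (e^{s·u} − 1) dμ(u), g(s) := ∫_{ℝ₊ⁿ} e^{s·r} f(r) dr for s ∈ (−∞,0)ⁿ, and b(r) := ∫_{ℝ₊ⁿ∖{0}} (f(r−u) − f(r)) dμ(u). Then b ∈ L¹(ℝⁿ) with ‖b‖_{L¹} ≤ k(f,μ), b vanishes a.e. outside ℝ₊ⁿ, and ∫_{ℝ₊ⁿ} e^{s·r} b(r) dr = ψ(s) g(s) for all s ∈ (−∞,0)ⁿ. -/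

import Mathlib

open MeasureTheory

/-- The positive orthant `ℝ₊ⁿ = [0,∞)ⁿ`. -/
def posOrthant (n : ℕ) : Set (Fin n → ℝ) := {u | ∀ j, 0 ≤ u j}

section Aux

variable {n : ℕ}

lemma posOrthant_measurableSet (n : ℕ) : MeasurableSet (posOrthant n) := by
  have h : posOrthant n = ⋂ j, {u : Fin n → ℝ | 0 ≤ u j} := by
    ext u; simp [posOrthant]
  rw [h]
  exact MeasurableSet.iInter fun j =>
    measurableSet_le measurable_const (measurable_pi_apply j)

lemma levy_sigmaFinite (μ : Measure (Fin n → ℝ))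
    (hμsupp : μ {u | ¬(u ∈ posOrthant n ∧ u ≠ 0)} = 0)
    (hμint : ∫⁻ u, ENNReal.ofReal (min 1 (∑ j, u j)) ∂μ < ⊤) : SigmaFinite μ := by
  refine ⟨⟨⟨fun k => {u | (1:ℝ)/(k+1) ≤ min 1 (∑ j, u j)}
        ∪ {u | ¬(u ∈ posOrthant n ∧ u ≠ 0)},
      fun _ => trivial, ?_, ?_⟩⟩⟩
  · intro k
    have hεpos : (0:ℝ) < 1/(k+1) := by positivity
    have hmeas : Measurable fun u : Fin n → ℝ => ENNReal.ofReal (min 1 (∑ j, u j)) :=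
      (measurable_const.min (Finset.measurable_sum Finset.univ fun j _ =>
        measurable_pi_apply j)).ennreal_ofReal
    have hmar := mul_meas_ge_le_lintegral₀ (μ := μ) hmeas.aemeasurable
        (ENNReal.ofReal (1/(k+1)))
    have hsub : {u : Fin n → ℝ | (1:ℝ)/(k+1) ≤ min 1 (∑ j, u j)} ⊆
        {u | ENNReal.ofReal (1/(k+1)) ≤ ENNReal.ofReal (min 1 (∑ j, u j))} :=
      fun u hu => ENNReal.ofReal_le_ofReal hu
    have hfin : μ {u : Fin n → ℝ |
        ENNReal.ofReal (1/(k+1)) ≤ ENNReal.ofReal (min 1 (∑ j, u j))} < ⊤ := by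
      by_contra hcon
      push_neg at hcon
      have htop : μ {u : Fin n → ℝ |
          ENNReal.ofReal (1/(k+1)) ≤ ENNReal.ofReal (min 1 (∑ j, u j))} = ⊤ :=
        top_le_iff.mp hcon
      rw [htop, ENNReal.mul_top (by simp [ENNReal.ofReal_eq_zero]; linarith)] at hmar
      exact hμint.ne (top_le_iff.mp hmar)
    refine lt_of_le_of_lt (measure_union_le _ _) ?_
    rw [hμsupp, add_zero]
    exact lt_of_le_of_lt (measure_mono hsub) hfin
  · ext u
    simp only [Set.mem_iUnion, Set.mem_union, Set.mem_setOf_eq, Set.mem_univ, iff_true]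
    by_cases h : u ∈ posOrthant n ∧ u ≠ 0
    · obtain ⟨huS, hune⟩ := h
      obtain ⟨j, hj⟩ := Function.ne_iff.mp hune
      have hj' : 0 < u j := lt_of_le_of_ne (huS j) (by simpa using Ne.symm hj)
      have hsum : 0 < ∑ j, u j :=
        lt_of_lt_of_le hj' (Finset.single_le_sum (fun i _ => huS i) (Finset.mem_univ j))
      have hmin : 0 < min 1 (∑ j, u j) := lt_min one_pos hsum
      obtain ⟨k, hk⟩ := exists_nat_one_div_lt hmin
      exact ⟨k, Or.inl hk.le⟩
    · exact ⟨0, Or.inr h⟩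

end Aux

/-- Let `f ∈ L¹(ℝⁿ)` vanish a.e. outside `ℝ₊ⁿ`, let `μ` be a positive
measure on `ℝ₊ⁿ∖{0}` with `k(f,μ) := ∫∫ |f(r−u) − f(r)| dr dμ(u) < ∞` and
`∫ min(1, Σ_j u_j) dμ(u) < ∞`. With `ψ(s) = ∫ (e^{s·u} − 1) dμ(u)`,
`g(s) = ∫_{ℝ₊ⁿ} e^{s·r} f(r) dr` and `b(r) = ∫ (f(r−u) − f(r)) dμ(u)`, one has
`b ∈ L¹(ℝⁿ)`, `‖b‖_{L¹} ≤ k(f,μ)`, `b` vanishes a.e. outside `ℝ₊ⁿ`, and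
`∫_{ℝ₊ⁿ} e^{s·r} b(r) dr = ψ(s) g(s)` for all `s ∈ (−∞,0)ⁿ`. -/
theorem laplace_of_levy_type_convolution
    (n : ℕ) (f : (Fin n → ℝ) → ℝ)
    (hf : Integrable f (volume : Measure (Fin n → ℝ)))
    (hfsupp : ∀ᵐ r ∂(volume : Measure (Fin n → ℝ)), r ∉ posOrthant n → f r = 0)
    (μ : Measure (Fin n → ℝ))
    (hμsupp : μ {u | ¬(u ∈ posOrthant n ∧ u ≠ 0)} = 0)
    (hμint : ∫⁻ u, ENNReal.ofReal (min 1 (∑ j, u j)) ∂μ < ⊤)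
    (hk : ∫⁻ u, (∫⁻ r, ENNReal.ofReal |f (r - u) - f r| ∂volume) ∂μ < ⊤) :
    Integrable (fun r => ∫ u, (f (r - u) - f r) ∂μ) (volume : Measure (Fin n → ℝ))
    ∧ ∫ r, |∫ u, (f (r - u) - f r) ∂μ| ∂(volume : Measure (Fin n → ℝ))
        ≤ (∫⁻ u, (∫⁻ r, ENNReal.ofReal |f (r - u) - f r| ∂volume) ∂μ).toReal
    ∧ (∀ᵐ r ∂(volume : Measure (Fin n → ℝ)),
        r ∉ posOrthant n → (∫ u, (f (r - u) - f r) ∂μ) = 0)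
    ∧ ∀ s : Fin n → ℝ, (∀ j, s j < 0) →
        ∫ r in posOrthant n, Real.exp (∑ j, s j * r j) * (∫ u, (f (r - u) - f r) ∂μ)
          = (∫ u, (Real.exp (∑ j, s j * u j) - 1) ∂μ)
              * ∫ r in posOrthant n, Real.exp (∑ j, s j * r j) * f r := by
  classical
  have hS : MeasurableSet (posOrthant n) := posOrthant_measurableSet n
  haveI : SigmaFinite μ := levy_sigmaFinite μ hμsupp hμint
  -- measurable representative
  obtain ⟨F, hFsm, hfF⟩ := hf.aestronglyMeasurable
  have hFmeas : Measurable F := hFsm.measurable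
  have hFint : Integrable F (volume : Measure (Fin n → ℝ)) := hf.congr hfF
  -- null sets
  set tN := toMeasurable (volume : Measure (Fin n → ℝ)) {x | ¬ f x = F x} with htNdef
  have htNm : MeasurableSet tN := measurableSet_toMeasurable _ _
  have htN0 : volume tN = 0 := by
    rw [htNdef, measure_toMeasurable]
    exact ae_iff.mp hfF
  have htNsub : {x : Fin n → ℝ | ¬ f x = F x} ⊆ tN := subset_toMeasurable _ _
  set W := {x : Fin n → ℝ | x ∈ posOrthant n ∨ F x = 0} with hWdef
  have hWm : MeasurableSet Wᶜ := by
    have : W = posOrthant n ∪ F ⁻¹' {0} := by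
      ext x; simp [hWdef]
    rw [this]
    exact (hS.union (hFmeas (measurableSet_singleton 0))).compl
  have hW0 : volume Wᶜ = 0 := by
    have hWae : ∀ᵐ x ∂(volume : Measure (Fin n → ℝ)), x ∈ W := by
      filter_upwards [hfsupp, hfF] with x h1 h2
      by_cases hx : x ∈ posOrthant n
      · exact Or.inl hx
      · exact Or.inr (h2 ▸ h1 hx)
    have := ae_iff.mp hWae
    exact this
  -- translation invariance helper
  have htrans : ∀ (t : Set (Fin n → ℝ)), MeasurableSet t → volume t = 0 →
      ∀ (u : Fin n → ℝ), volume {r : Fin n → ℝ | r - u ∈ t} = 0 := by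
    intro t ht h0 u
    have := (measurePreserving_sub_right (volume : Measure (Fin n → ℝ)) u).measure_preimage
      ht.nullMeasurableSet
    simpa [Set.preimage, h0] using this
  have htransAe : ∀ (t : Set (Fin n → ℝ)), MeasurableSet t → volume t = 0 →
      ∀ (u : Fin n → ℝ), ∀ᵐ r ∂(volume : Measure (Fin n → ℝ)), r - u ∉ t := by
    intro t ht h0 u
    rw [ae_iff]
    simpa using htrans t ht h0 u
  -- product null helpers
  have hprod_null : ∀ (t : Set (Fin n → ℝ)), MeasurableSet t → volume t = 0 →
      ∀ᵐ p ∂((volume : Measure (Fin n → ℝ)).prod μ), p.1 - p.2 ∉ t := by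
    intro t ht h0
    have hms : MeasurableSet {p : (Fin n → ℝ) × (Fin n → ℝ) | p.1 - p.2 ∈ t} :=
      (measurable_fst.sub measurable_snd) ht
    rw [ae_iff]
    have heq : {p : (Fin n → ℝ) × (Fin n → ℝ) | ¬ p.1 - p.2 ∉ t}
        = {p : (Fin n → ℝ) × (Fin n → ℝ) | p.1 - p.2 ∈ t} := by
      ext p; simp
    rw [heq, Measure.prod_apply_symm hms]
    have hsec : ∀ u : Fin n → ℝ, volume {a : Fin n → ℝ | a - u ∈ t} = 0 :=
      fun u => htrans t ht h0 u
    simp [hsec]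
  have hfst_null : ∀ (t : Set (Fin n → ℝ)), MeasurableSet t → volume t = 0 →
      ∀ᵐ p ∂((volume : Measure (Fin n → ℝ)).prod μ), p.1 ∉ t := by
    intro t ht h0
    have hms : MeasurableSet {p : (Fin n → ℝ) × (Fin n → ℝ) | p.1 ∈ t} :=
      measurable_fst ht
    rw [ae_iff]
    have heq : {p : (Fin n → ℝ) × (Fin n → ℝ) | ¬ p.1 ∉ t}
        = {p : (Fin n → ℝ) × (Fin n → ℝ) | p.1 ∈ t} := by
      ext p; simp
    rw [heq, Measure.prod_apply_symm hms]
    simp [h0]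
  have hsnd_null : ∀ (t : Set (Fin n → ℝ)), MeasurableSet t → μ t = 0 →
      ∀ᵐ p ∂((volume : Measure (Fin n → ℝ)).prod μ), p.2 ∉ t := by
    intro t ht h0
    have hms : MeasurableSet {p : (Fin n → ℝ) × (Fin n → ℝ) | p.2 ∈ t} :=
      measurable_snd ht
    rw [ae_iff]
    have heq : {p : (Fin n → ℝ) × (Fin n → ℝ) | ¬ p.2 ∉ t}
        = {p : (Fin n → ℝ) × (Fin n → ℝ) | p.2 ∈ t} := by
      ext p; simp
    rw [heq, Measure.prod_apply hms]
    simp [h0]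
  -- μ-a.e. support
  have hμbad : MeasurableSet {u : Fin n → ℝ | ¬(u ∈ posOrthant n ∧ u ≠ 0)} := by
    have : {u : Fin n → ℝ | ¬(u ∈ posOrthant n ∧ u ≠ 0)}
        = (posOrthant n ∩ {(0 : Fin n → ℝ)}ᶜ)ᶜ := by
      ext u
      simp only [Set.mem_setOf_eq, Set.mem_compl_iff, Set.mem_inter_iff,
        Set.mem_singleton_iff, not_and_or, not_not, ne_eq]
    rw [this]
    exact (hS.inter (measurableSet_singleton 0).compl).compl
  have hμS : ∀ᵐ u ∂μ, u ∈ posOrthant n := by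
    have : ∀ᵐ u ∂μ, ¬ ¬(u ∈ posOrthant n ∧ u ≠ 0) := ae_iff.mpr (by simpa using hμsupp)
    filter_upwards [this] with u hu
    exact (not_not.mp hu).1
  -- the big product a.e. statement
  have haeProd : ∀ᵐ p ∂((volume : Measure (Fin n → ℝ)).prod μ),
      f (p.1 - p.2) = F (p.1 - p.2) ∧ f p.1 = F p.1 ∧
      (p.1 - p.2 ∉ posOrthant n → F (p.1 - p.2) = 0) ∧ p.2 ∈ posOrthant n := by
    have h1 := hprod_null tN htNm htN0
    have h2 := hfst_null tN htNm htN0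
    have h3 := hprod_null Wᶜ hWm hW0
    have h4 := hsnd_null _ hμbad hμsupp
    filter_upwards [h1, h2, h3, h4] with p p1 p2 p3 p4
    refine ⟨?_, ?_, ?_, ?_⟩
    · by_contra hc; exact p1 (htNsub hc)
    · by_contra hc; exact p2 (htNsub hc)
    · intro hns
      have : p.1 - p.2 ∈ W := not_not.mp (by simpa using p3)
      exact this.resolve_left hns
    · have h := p4
      simp only [Set.mem_setOf_eq, not_not] at h
      exact h.1
  have haeRU := MeasureTheory.Measure.ae_ae_of_ae_prod haeProd
  -- per-u a.e. facts
  have haeU : ∀ u : Fin n → ℝ, ∀ᵐ r ∂(volume : Measure (Fin n → ℝ)),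
      f (r - u) = F (r - u) ∧ f r = F r ∧ (r - u ∉ posOrthant n → F (r - u) = 0) := by
    intro u
    filter_upwards [htransAe tN htNm htN0 u, hfF, htransAe Wᶜ hWm hW0 u] with r h1 h2 h3
    refine ⟨by_contra fun hc => h1 (htNsub hc), h2, fun hns => ?_⟩
    have h3' : r - u ∈ W := not_not.mp (by simpa using h3)
    exact h3'.resolve_left hns
  -- the kernel H
  set H : (Fin n → ℝ) × (Fin n → ℝ) → ℝ := fun p => F (p.1 - p.2) - F p.1 with hHdef
  have hHmeas : Measurable H :=
    (hFmeas.comp (measurable_fst.sub measurable_snd)).sub (hFmeas.comp measurable_fst)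
  set K := ∫⁻ u, (∫⁻ r, ENNReal.ofReal |f (r - u) - f r| ∂volume) ∂μ with hKdef
  have hKeq : ∫⁻ p, ‖H p‖₊ ∂((volume : Measure (Fin n → ℝ)).prod μ) = K := by
    rw [lintegral_prod _ hHmeas.nnnorm.coe_nnreal_ennreal.aemeasurable]
    rw [lintegral_lintegral_swap hHmeas.nnnorm.coe_nnreal_ennreal.aemeasurable]
    refine lintegral_congr fun u => ?_
    refine lintegral_congr_ae ?_
    filter_upwards [haeU u] with r hr
    rw [hHdef]
    simp only
    rw [← hr.1, ← hr.2.1]; exact Real.enorm_eq_ofReal_abs _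
  have hHint : Integrable H ((volume : Measure (Fin n → ℝ)).prod μ) :=
    ⟨hHmeas.aestronglyMeasurable, by rw [HasFiniteIntegral]; exact lt_of_eq_of_lt hKeq hk⟩
  have hb'int : Integrable (fun r => ∫ u, H (r, u) ∂μ) (volume : Measure (Fin n → ℝ)) :=
    hHint.integral_prod_left
  have hbb' : (fun r => ∫ u, (f (r - u) - f r) ∂μ)
      =ᵐ[(volume : Measure (Fin n → ℝ))] (fun r => ∫ u, H (r, u) ∂μ) := by
    filter_upwards [haeRU] with r hr
    refine integral_congr_ae ?_
    filter_upwards [hr] with u hu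
    rw [hu.1, hu.2.1]
  have hbint : Integrable (fun r => ∫ u, (f (r - u) - f r) ∂μ)
      (volume : Measure (Fin n → ℝ)) := hb'int.congr hbb'.symm
  refine ⟨hbint, ?_, ?_, ?_⟩
  -- Part 2 : norm bound
  · have e0 : ∫ r, |∫ u, (f (r - u) - f r) ∂μ| ∂(volume : Measure (Fin n → ℝ))
        = ∫ r, |∫ u, H (r, u) ∂μ| ∂(volume : Measure (Fin n → ℝ)) := by
      refine integral_congr_ae ?_
      filter_upwards [hbb'] with r hr
      rw [hr]
    have e1 : ∫ r, |∫ u, H (r, u) ∂μ| ∂(volume : Measure (Fin n → ℝ))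
        = (∫⁻ r, ‖∫ u, H (r, u) ∂μ‖₊ ∂(volume : Measure (Fin n → ℝ))).toReal := by
      have := integral_norm_eq_lintegral_enorm hb'int.aestronglyMeasurable
      simp only [Real.norm_eq_abs] at this; exact this
    have e2 : (∫⁻ r, ‖∫ u, H (r, u) ∂μ‖₊ ∂(volume : Measure (Fin n → ℝ))) ≤ K := by
      calc ∫⁻ r, ‖∫ u, H (r, u) ∂μ‖₊ ∂(volume : Measure (Fin n → ℝ))
          ≤ ∫⁻ r, ∫⁻ u, ‖H (r, u)‖₊ ∂μ ∂(volume : Measure (Fin n → ℝ)) :=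
            lintegral_mono fun r => enorm_integral_le_lintegral_enorm _
        _ = ∫⁻ p, ‖H p‖₊ ∂((volume : Measure (Fin n → ℝ)).prod μ) :=
            (lintegral_prod _ hHmeas.nnnorm.coe_nnreal_ennreal.aemeasurable).symm
        _ = K := hKeq
    rw [e0, e1]
    exact ENNReal.toReal_mono hk.ne e2
  -- Part 3 : support
  · filter_upwards [haeRU, hfF, hfsupp] with r hr hrF hrs hrnot
    have hFr0 : F r = 0 := hrF ▸ hrs hrnot
    refine integral_eq_zero_of_ae ?_
    filter_upwards [hr] with u hu
    obtain ⟨h1, h2, h3, h4⟩ := hu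
    have hru : r - u ∉ posOrthant n := by
      intro hmem
      apply hrnot
      intro j
      have ha := hmem j
      have hb := h4 j
      simp only [Pi.sub_apply] at ha
      linarith
    have : f (r - u) = 0 := h1.trans (h3 hru)
    simp [this, hrF, hFr0]
  -- Part 4 : Laplace transform identity
  · intro s hs
    set E : (Fin n → ℝ) → ℝ := fun r => Real.exp (∑ j, s j * r j) with hEdef
    have hEmeas : Measurable E :=
      Real.measurable_exp.comp (Finset.measurable_sum Finset.univ fun j _ =>
        by fun_prop)
    have hEpos : ∀ r, 0 < E r := fun r => Real.exp_pos _
    have hEle : ∀ r, r ∈ posOrthant n → E r ≤ 1 := by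
      intro r hr
      rw [hEdef]
      refine Real.exp_le_one_iff.mpr ?_
      exact Finset.sum_nonpos fun j _ =>
        mul_nonpos_of_nonpos_of_nonneg (le_of_lt (hs j)) (hr j)
    have hEadd : ∀ t u : Fin n → ℝ, E (t + u) = E t * E u := by
      intro t u
      rw [hEdef]
      simp only
      rw [← Real.exp_add]
      congr 1
      rw [← Finset.sum_add_distrib]
      exact Finset.sum_congr rfl fun j _ => by simp [mul_add]
    -- restricted product measure
    have hrestr : ((volume : Measure (Fin n → ℝ)).restrict (posOrthant n)).prod μ
        = ((volume : Measure (Fin n → ℝ)).prod μ).restrict ((posOrthant n) ×ˢ Set.univ) := by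
      rw [← Measure.prod_restrict, Measure.restrict_univ]
    have hHrestrict : Integrable H
        (((volume : Measure (Fin n → ℝ)).restrict (posOrthant n)).prod μ) := by
      rw [hrestr]; exact hHint.restrict
    have hmem1 : ∀ᵐ p ∂(((volume : Measure (Fin n → ℝ)).restrict (posOrthant n)).prod μ),
        p.1 ∈ posOrthant n := by
      rw [hrestr]
      filter_upwards [ae_restrict_mem (hS.prod MeasurableSet.univ)] with p hp
      exact hp.1
    have hG2int : Integrable (fun p : (Fin n → ℝ) × (Fin n → ℝ) => E p.1 * H p)
        (((volume : Measure (Fin n → ℝ)).restrict (posOrthant n)).prod μ) := by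
      refine hHrestrict.norm.mono' ((hEmeas.comp measurable_fst).mul hHmeas).aestronglyMeasurable ?_
      filter_upwards [hmem1] with p hp
      rw [Real.norm_eq_abs, Real.norm_eq_abs, abs_mul, abs_of_pos (hEpos _)]
      calc E p.1 * |H p| ≤ 1 * |H p| :=
            mul_le_mul_of_nonneg_right (hEle _ hp) (abs_nonneg _)
        _ = |H p| := one_mul _
    -- integrabilities on the slice
    have hI2 : Integrable (fun r => E r * F r)
        ((volume : Measure (Fin n → ℝ)).restrict (posOrthant n)) := by
      refine (hFint.restrict (s := posOrthant n)).norm.mono'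
        (hEmeas.mul hFmeas).aestronglyMeasurable ?_
      filter_upwards [ae_restrict_mem hS] with r hr
      rw [Real.norm_eq_abs, Real.norm_eq_abs, abs_mul, abs_of_pos (hEpos _)]
      calc E r * |F r| ≤ 1 * |F r| :=
            mul_le_mul_of_nonneg_right (hEle _ hr) (abs_nonneg _)
        _ = |F r| := one_mul _
    -- value of g with F
    have hgg' : ∫ r in posOrthant n, E r * f r ∂(volume : Measure (Fin n → ℝ))
        = ∫ r in posOrthant n, E r * F r ∂(volume : Measure (Fin n → ℝ)) := by
      refine integral_congr_ae ?_
      filter_upwards [ae_restrict_of_ae hfF] with r hr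
      rw [hr]
    -- inner integral computation, for a.e. u
    have hinner : ∀ᵐ u ∂μ, (∫ r in posOrthant n, E r * H (r, u)
          ∂(volume : Measure (Fin n → ℝ)))
        = (Real.exp (∑ j, s j * u j) - 1)
            * ∫ r in posOrthant n, E r * F r ∂(volume : Measure (Fin n → ℝ)) := by
      filter_upwards [hμS] with u huS
      have hI1 : Integrable (fun r => E r * F (r - u))
          ((volume : Measure (Fin n → ℝ)).restrict (posOrthant n)) := by
        refine ((hFint.comp_sub_right u).restrict (s := posOrthant n)).norm.mono'
          (hEmeas.mul (hFmeas.comp (measurable_id.sub measurable_const))).aestronglyMeasurable ?_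
        filter_upwards [ae_restrict_mem hS] with r hr
        rw [Real.norm_eq_abs, Real.norm_eq_abs, abs_mul, abs_of_pos (hEpos _)]
        calc E r * |F (r - u)| ≤ 1 * |F (r - u)| :=
              mul_le_mul_of_nonneg_right (hEle _ hr) (abs_nonneg _)
          _ = |F (r - u)| := one_mul _
      have hsplit : (∫ r in posOrthant n, E r * H (r, u)
            ∂(volume : Measure (Fin n → ℝ)))
          = (∫ r in posOrthant n, E r * F (r - u) ∂(volume : Measure (Fin n → ℝ)))
            - ∫ r in posOrthant n, E r * F r ∂(volume : Measure (Fin n → ℝ)) := by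
        rw [← integral_sub hI1 hI2]
        refine integral_congr_ae (Filter.Eventually.of_forall fun r => ?_)
        rw [hHdef]
        simp only
        ring
      have hfirst : ∫ r in posOrthant n, E r * F (r - u) ∂(volume : Measure (Fin n → ℝ))
          = Real.exp (∑ j, s j * u j)
              * ∫ r in posOrthant n, E r * F r ∂(volume : Measure (Fin n → ℝ)) := by
        have haeW : ∀ᵐ r ∂(volume : Measure (Fin n → ℝ)), r - u ∉ Wᶜ :=
          htransAe Wᶜ hWm hW0 u
        calc ∫ r in posOrthant n, E r * F (r - u) ∂(volume : Measure (Fin n → ℝ))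
            = ∫ r, (posOrthant n).indicator (fun r => E r * F (r - u)) r
                ∂(volume : Measure (Fin n → ℝ)) := (integral_indicator hS).symm
          _ = ∫ r, (posOrthant n).indicator (fun t => E (t + u) * F t) (r - u)
                ∂(volume : Measure (Fin n → ℝ)) := by
              refine integral_congr_ae ?_
              filter_upwards [haeW] with r hrW
              have hrW' : r - u ∈ W := not_not.mp (by simpa using hrW)
              by_cases h1 : r - u ∈ posOrthant n
              · have hrS : r ∈ posOrthant n := by
                  intro j
                  have ha := h1 j
                  have hb := huS j
                  simp only [Pi.sub_apply] at ha
                  linarith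
                rw [Set.indicator_of_mem hrS, Set.indicator_of_mem h1, sub_add_cancel]
              · have hF0 : F (r - u) = 0 := hrW'.resolve_left h1
                rw [Set.indicator_of_notMem h1]
                by_cases h2 : r ∈ posOrthant n
                · rw [Set.indicator_of_mem h2, hF0, mul_zero]
                · rw [Set.indicator_of_notMem h2]
          _ = ∫ t, (posOrthant n).indicator (fun t => E (t + u) * F t) t
                ∂(volume : Measure (Fin n → ℝ)) := integral_sub_right_eq_self _ u
          _ = ∫ t in posOrthant n, E (t + u) * F t ∂(volume : Measure (Fin n → ℝ)) :=
              integral_indicator hS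
          _ = ∫ t in posOrthant n, Real.exp (∑ j, s j * u j) * (E t * F t)
                ∂(volume : Measure (Fin n → ℝ)) := by
              refine integral_congr_ae (Filter.Eventually.of_forall fun t => ?_)
              show E (t + u) * F t = Real.exp (∑ j, s j * u j) * (E t * F t)
              rw [hEadd]
              have : E u = Real.exp (∑ j, s j * u j) := rfl
              rw [this]
              ring
          _ = Real.exp (∑ j, s j * u j)
                * ∫ t in posOrthant n, E t * F t ∂(volume : Measure (Fin n → ℝ)) :=
              integral_const_mul _ _
      rw [hsplit, hfirst]
      ring
    -- assembling
    have hstep1 : ∫ r in posOrthant n, E r * (∫ u, (f (r - u) - f r) ∂μ)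
          ∂(volume : Measure (Fin n → ℝ))
        = ∫ r in posOrthant n, ∫ u, E r * H (r, u) ∂μ ∂(volume : Measure (Fin n → ℝ)) := by
      refine integral_congr_ae ?_
      filter_upwards [ae_restrict_of_ae hbb'] with r hr
      rw [hr]
      exact (integral_const_mul _ _).symm
    have hstep2 : ∫ r in posOrthant n, ∫ u, E r * H (r, u) ∂μ
          ∂(volume : Measure (Fin n → ℝ))
        = ∫ u, ∫ r in posOrthant n, E r * H (r, u) ∂(volume : Measure (Fin n → ℝ)) ∂μ :=
      integral_integral_swap hG2int
    have hstep3 : ∫ u, ∫ r in posOrthant n, E r * H (r, u)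
          ∂(volume : Measure (Fin n → ℝ)) ∂μ
        = ∫ u, (Real.exp (∑ j, s j * u j) - 1)
            * ∫ r in posOrthant n, E r * F r ∂(volume : Measure (Fin n → ℝ)) ∂μ :=
      integral_congr_ae hinner
    calc ∫ r in posOrthant n, Real.exp (∑ j, s j * r j) * (∫ u, (f (r - u) - f r) ∂μ)
          ∂(volume : Measure (Fin n → ℝ))
        = ∫ u, (Real.exp (∑ j, s j * u j) - 1)
            * ∫ r in posOrthant n, E r * F r ∂(volume : Measure (Fin n → ℝ)) ∂μ := by
          rw [← hstep3, ← hstep2, ← hstep1]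
      _ = (∫ u, (Real.exp (∑ j, s j * u j) - 1) ∂μ)
            * ∫ r in posOrthant n, E r * F r ∂(volume : Measure (Fin n → ℝ)) :=
          integral_mul_const _ _
      _ = (∫ u, (Real.exp (∑ j, s j * u j) - 1) ∂μ)
            * ∫ r in posOrthant n, Real.exp (∑ j, s j * r j) * f r
                ∂(volume : Measure (Fin n → ℝ)) := by
          rw [hgg']
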